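/- Let f be differentiable and strictly increasing on [t₁, t₃] with f ≥ 0 there, t₁ < t₂ < t₃, and 0 < m ≤ f' ≤ M on [t₁, t₃]. Set I₁ = ∫_{t₁}^{t₂} f and I₂ = ∫_{t₂}^{t₃} f, Δf₁ = f(t₂)-f(t₁), Δf₂ = f(t₃)-f(t₂). Then Δf₁·I₂ - Δf₂·I₁ ≥ (m³/(2M))·min(t₂-t₁, t₃-t₂)³ · ε̄ whenever ε̄ ≤ (t₃-t₂)/(t₂-t₁) + 2 - 2f(t₁)·(M-m)/(m²(t₂-t₁)) - M²/m², with ε̄ ≥ 0. -/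

import Mathlib

set_option maxHeartbeats 1000000


open Set MeasureTheory intervalIntegral

/-- The core Wronskian-type inequality behind Lemma 1 of the paper. -/
theorem wronskian_lower_bound
    (t₁ t₂ t₃ m M εbar : ℝ) (h12 : t₁ < t₂) (h23 : t₂ < t₃)
    (hm : 0 < m) (hmM : m ≤ M)
    (f f' : ℝ → ℝ)
    (hf0 : ∀ t ∈ Icc t₁ t₃, 0 ≤ f t)
    (hmono : StrictMonoOn f (Icc t₁ t₃))
    (hderiv : ∀ t ∈ Icc t₁ t₃, HasDerivAt f (f' t) t)
    (hbound : ∀ t ∈ Icc t₁ t₃, m ≤ f' t ∧ f' t ≤ M)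
    (hεnn : 0 ≤ εbar)
    (hεle : εbar ≤ (t₃ - t₂) / (t₂ - t₁) + 2
        - 2 * f t₁ * (M - m) / (m ^ 2 * (t₂ - t₁)) - M ^ 2 / m ^ 2) :
    (f t₂ - f t₁) * (∫ s in t₂..t₃, f s) - (f t₃ - f t₂) * (∫ s in t₁..t₂, f s) ≥
      (m ^ 3 / (2 * M)) * (min (t₂ - t₁) (t₃ - t₂)) ^ 3 * εbar := by
  have hM : (0:ℝ) < M := lt_of_lt_of_le hm hmM
  have ha : (0:ℝ) < t₂ - t₁ := by linarith
  have hb : (0:ℝ) < t₃ - t₂ := by linarith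
  have ht1 : t₁ ∈ Icc t₁ t₃ := ⟨le_rfl, by linarith⟩
  have ht2 : t₂ ∈ Icc t₁ t₃ := ⟨h12.le, h23.le⟩
  have ht3 : t₃ ∈ Icc t₁ t₃ := ⟨by linarith, le_rfl⟩
  have hcont : ContinuousOn f (Icc t₁ t₃) := fun t ht =>
    (hderiv t ht).continuousAt.continuousWithinAt
  have hdiff : DifferentiableOn ℝ f (interior (Icc t₁ t₃)) := fun t ht =>
    ((hderiv t (interior_subset ht)).differentiableAt).differentiableWithinAt
  -- two-sided increment bounds
  have hlow : ∀ x ∈ Icc t₁ t₃, ∀ y ∈ Icc t₁ t₃, x ≤ y → m * (y - x) ≤ f y - f x :=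
    (convex_Icc t₁ t₃).mul_sub_le_image_sub_of_le_deriv hcont hdiff
      (fun t ht => by
        rw [(hderiv t (interior_subset ht)).deriv]
        exact (hbound t (interior_subset ht)).1)
  have hhigh : ∀ x ∈ Icc t₁ t₃, ∀ y ∈ Icc t₁ t₃, x ≤ y → f y - f x ≤ M * (y - x) :=
    (convex_Icc t₁ t₃).image_sub_le_mul_sub_of_deriv_le hcont hdiff
      (fun t ht => by
        rw [(hderiv t (interior_subset ht)).deriv]
        exact (hbound t (interior_subset ht)).2)
  have hd1l : m * (t₂ - t₁) ≤ f t₂ - f t₁ := hlow t₁ ht1 t₂ ht2 h12.le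
  have hd1u : f t₂ - f t₁ ≤ M * (t₂ - t₁) := hhigh t₁ ht1 t₂ ht2 h12.le
  have hd2l : m * (t₃ - t₂) ≤ f t₃ - f t₂ := hlow t₂ ht2 t₃ ht3 h23.le
  have hd2u : f t₃ - f t₂ ≤ M * (t₃ - t₂) := hhigh t₂ ht2 t₃ ht3 h23.le
  -- integrability
  have hint2 : IntervalIntegrable f volume t₂ t₃ := by
    apply ContinuousOn.intervalIntegrable
    apply hcont.mono
    rw [uIcc_of_le h23.le]
    exact Icc_subset_Icc h12.le le_rfl
  have hint1 : IntervalIntegrable f volume t₁ t₂ := by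
    apply ContinuousOn.intervalIntegrable
    apply hcont.mono
    rw [uIcc_of_le h12.le]
    exact Icc_subset_Icc le_rfl h23.le
  -- linear integral computation
  have hcalc : ∀ a b c k : ℝ, ∫ s in a..b, (c + k * (s - a)) = c * (b - a) + k * ((b - a)^2/2) := by
    intro a b c k
    have h1 : (fun s => c + k * (s - a)) = fun s => (c - k * a) + k * s := by funext s; ring
    rw [h1, intervalIntegral.integral_add (intervalIntegrable_const)
        ((show Continuous fun s : ℝ => k * s from continuous_const.mul continuous_id').intervalIntegrable _ _),
      intervalIntegral.integral_const_mul, integral_id, intervalIntegral.integral_const]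
    simp only [smul_eq_mul]; ring
  -- integral bounds
  have hI2 : f t₂ * (t₃ - t₂) + m * ((t₃ - t₂)^2/2) ≤ ∫ s in t₂..t₃, f s := by
    have hmon : ∀ s ∈ Icc t₂ t₃, f t₂ + m * (s - t₂) ≤ f s := by
      intro s hs
      have hsmem : s ∈ Icc t₁ t₃ := ⟨le_trans h12.le hs.1, hs.2⟩
      have := hlow t₂ ht2 s hsmem hs.1
      linarith
    have := intervalIntegral.integral_mono_on (μ := volume) h23.le
      ((continuous_const.add (continuous_const.mul (continuous_id'.sub continuous_const))).intervalIntegrable _ _)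
      hint2 hmon
    simp only [Pi.add_apply, Pi.mul_apply, Pi.sub_apply] at this
    rw [hcalc] at this
    exact this
  have hI1 : (∫ s in t₁..t₂, f s) ≤ f t₂ * (t₂ - t₁) - m * ((t₂ - t₁)^2/2) := by
    have hmon : ∀ s ∈ Icc t₁ t₂, f s ≤ (f t₂ - m * (t₂ - t₁)) + m * (s - t₁) := by
      intro s hs
      have hsmem : s ∈ Icc t₁ t₃ := ⟨hs.1, le_trans hs.2 h23.le⟩
      have := hlow s hsmem t₂ ht2 hs.2
      linarith
    have := intervalIntegral.integral_mono_on (μ := volume) h12.le hint1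
      ((continuous_const.add (continuous_const.mul (continuous_id'.sub continuous_const))).intervalIntegrable _ _)
      hmon
    simp only [Pi.add_apply, Pi.mul_apply, Pi.sub_apply] at this
    rw [hcalc] at this
    linarith
  -- clear denominators in the epsilon hypothesis
  have hK : m ^ 2 * (t₂ - t₁) * εbar ≤
      m ^ 2 * (t₃ - t₂) + 2 * m ^ 2 * (t₂ - t₁) - 2 * f t₁ * (M - m) - M ^ 2 * (t₂ - t₁) := by
    have h1 : (0:ℝ) < m ^ 2 * (t₂ - t₁) := by positivity
    have h2 := mul_le_mul_of_nonneg_left hεle h1.le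
    have heq : m ^ 2 * (t₂ - t₁) * ((t₃ - t₂) / (t₂ - t₁) + 2
        - 2 * f t₁ * (M - m) / (m ^ 2 * (t₂ - t₁)) - M ^ 2 / m ^ 2) =
        m ^ 2 * (t₃ - t₂) + 2 * m ^ 2 * (t₂ - t₁) - 2 * f t₁ * (M - m) - M ^ 2 * (t₂ - t₁) := by
      field_simp
    rw [heq] at h2
    exact h2
  set a := t₂ - t₁ with hadef
  set b := t₃ - t₂ with hbdef
  set A := f t₁ with hAdef
  set B := f t₂ with hBdef
  set C := f t₃ with hCdef
  set I₂ := ∫ s in t₂..t₃, f s with hI₂def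
  set I₁ := ∫ s in t₁..t₂, f s with hI₁def
  have hF : 0 ≤ A := hf0 t₁ ht1
  clear hεle
  clear_value a b A B C I₂ I₁
  have hD1 : 0 ≤ B - A := le_trans (by positivity) hd1l
  have hD2 : 0 ≤ C - B := le_trans (by positivity) hd2l
  have hKnn : 0 ≤ m ^ 2 * b + 2 * m ^ 2 * a - 2 * A * (M - m) - M ^ 2 * a :=
    le_trans (by positivity) hK
  have hA1 : (C - B) * (A + m * a + m * b / 2) ≤ M * (B * b + m * b ^ 2 / 2) := by
    linarith [mul_nonneg hF (by linarith : (0:ℝ) ≤ M * b - (C - B)),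
      mul_nonneg (by positivity : (0:ℝ) ≤ M * b) (by linarith : (0:ℝ) ≤ (B - A) - m * a),
      mul_nonneg (by positivity : (0:ℝ) ≤ m * a) (by linarith : (0:ℝ) ≤ M * b - (C - B)),
      mul_nonneg (by positivity : (0:ℝ) ≤ m * b / 2) (by linarith : (0:ℝ) ≤ M * b - (C - B))]
  have hB1 : 2 * m * M * (B * a - m * a ^ 2 / 2) ≤ (B - A) * (2 * M * A + 2 * m * M * a - m ^ 2 * a) := by
    linarith [mul_nonneg (by positivity : (0:ℝ) ≤ 2 * M * A) (by linarith : (0:ℝ) ≤ (B - A) - m * a),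
      mul_nonneg (by positivity : (0:ℝ) ≤ m ^ 2 * a) (by linarith : (0:ℝ) ≤ M * a - (B - A))]
  have q1 : (B - A) * ((C - B) * (A + m * a + m * b / 2)) ≤ M * (B - A) * I₂ := by
    linarith [mul_le_mul_of_nonneg_left hA1 hD1,
      mul_le_mul_of_nonneg_left hI2 (mul_nonneg hM.le hD1)]
  have e1 : 2 * m * ((B - A) * ((C - B) * (A + m * a + m * b / 2))) ≤ 2 * m * (M * (B - A) * I₂) :=
    mul_le_mul_of_nonneg_left q1 (by positivity)
  have e2 : 2 * m * M * ((C - B) * I₁) ≤ (B - A) * (C - B) * (2 * M * A + 2 * m * M * a - m ^ 2 * a) := by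
    linarith [mul_le_mul_of_nonneg_left hI1 (by positivity : (0:ℝ) ≤ 2 * m * M * (C - B)),
      mul_le_mul_of_nonneg_left hB1 hD2]
  have hW : (B - A) * (C - B) * (m ^ 2 * b + 3 * m ^ 2 * a - 2 * m * M * a - 2 * A * (M - m)) ≤
      2 * m * M * ((B - A) * I₂ - (C - B) * I₁) := by linarith [e1, e2]
  have hDD : m ^ 2 * a * b ≤ (B - A) * (C - B) := by
    linarith [mul_nonneg hD2 (by linarith : (0:ℝ) ≤ (B - A) - m * a),
      mul_nonneg (mul_nonneg hm.le ha.le) (by linarith : (0:ℝ) ≤ (C - B) - m * b)]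
  have hGK : m ^ 2 * b + 2 * m ^ 2 * a - 2 * A * (M - m) - M ^ 2 * a ≤
      m ^ 2 * b + 3 * m ^ 2 * a - 2 * m * M * a - 2 * A * (M - m) := by
    linarith [mul_nonneg ha.le (sq_nonneg (M - m))]
  have h5 : m ^ 2 * a * b * (m ^ 2 * b + 2 * m ^ 2 * a - 2 * A * (M - m) - M ^ 2 * a) ≤
      (B - A) * (C - B) * (m ^ 2 * b + 3 * m ^ 2 * a - 2 * m * M * a - 2 * A * (M - m)) := by
    linarith [mul_le_mul hDD hGK hKnn (mul_nonneg hD1 hD2)]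
  have hμ : 0 ≤ min a b := le_min ha.le hb.le
  have hμ3 : (min a b) ^ 3 ≤ a ^ 2 * b := by
    rcases le_total a b with h | h
    · rw [min_eq_left h]
      linarith [mul_nonneg (mul_nonneg ha.le ha.le) (sub_nonneg.2 h)]
    · rw [min_eq_right h]
      linarith [mul_nonneg (mul_nonneg hb.le (sub_nonneg.2 h)) (by linarith : (0:ℝ) ≤ a + b)]
  have h6 : m ^ 2 * (min a b) ^ 3 * (m ^ 2 * b + 2 * m ^ 2 * a - 2 * A * (M - m) - M ^ 2 * a) ≤
      m ^ 2 * (a ^ 2 * b) * (m ^ 2 * b + 2 * m ^ 2 * a - 2 * A * (M - m) - M ^ 2 * a) := by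
    linarith [mul_le_mul_of_nonneg_left (mul_le_mul_of_nonneg_right hμ3 hKnn) (sq_nonneg m)]
  have h7 : m ^ 2 * (min a b) ^ 3 * (m ^ 2 * a * εbar) ≤
      m ^ 2 * (min a b) ^ 3 * (m ^ 2 * b + 2 * m ^ 2 * a - 2 * A * (M - m) - M ^ 2 * a) :=
    mul_le_mul_of_nonneg_left hK (by positivity)
  have hbig : m ^ 4 * a * (min a b) ^ 3 * εbar ≤ 2 * m * M * a * ((B - A) * I₂ - (C - B) * I₁) := by
    linarith [h7, h6, mul_le_mul_of_nonneg_left h5 ha.le, mul_le_mul_of_nonneg_left hW ha.le]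
  rw [ge_iff_le, show m ^ 3 / (2 * M) * (min a b) ^ 3 * εbar
      = m ^ 3 * (min a b) ^ 3 * εbar / (2 * M) by ring,
    div_le_iff₀ (by positivity : (0:ℝ) < 2 * M)]
  have hma : (0:ℝ) < m * a := by positivity
  apply le_of_mul_le_mul_left _ hma
  linarith only [hbig]
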